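/- arXiv:1112.5895 — 3 statements merged into one kernel-verified Lean document; each statement's English description precedes it below -/
import Mathlib

section
/- Appending additional measurement rows to the sensing matrix cannot increase the MSE of the MAP linear decoder: if Φ₁ ∈ R^{M₁×N} and Φ₂ = [Φ₁; Ψ] ∈ R^{(M₁+M₂)×N}, both of full row rank, then tr(Σ − ΣΦ₂ᵀ(Φ₂ΣΦ₂ᵀ)⁻¹Φ₂Σ) ≤ tr(Σ − ΣΦ₁ᵀ(Φ₁ΣΦ₁ᵀ)⁻¹Φ₁Σ). -/
open Matrix
open scoped MatrixOrder

/-- Trace of a positive semidefinite real matrix is nonnegative. -/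
lemma aux_trace_nonneg {n : Type*} [Fintype n] [DecidableEq n]
    {M : Matrix n n ℝ} (h : M.PosSemidef) : 0 ≤ M.trace := by
  rw [Matrix.trace]
  refine Finset.sum_nonneg fun i _ => ?_
  have := h.dotProduct_mulVec_nonneg (Pi.single i 1)
  simpa [dotProduct, Matrix.mulVec, Pi.single_apply] using this

/-- A matrix with full row rank conjugating a PosDef matrix gives a PosDef matrix. -/
lemma aux_posDef_conj {m n : Type*} [Fintype m] [Fintype n] [DecidableEq m] [DecidableEq n]
    {S : Matrix n n ℝ} (hS : S.PosDef) (Φ : Matrix m n ℝ)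
    (h : Φ.rank = Fintype.card m) : (Φ * S * Φᵀ).PosDef := by
  have hli : LinearIndependent ℝ (fun i => Φ i) := by
    rw [linearIndependent_iff_card_eq_finrank_span, h.symm, Matrix.rank_eq_finrank_span_row]
    rfl
  have hinj : Function.Injective Φ.vecMul := Matrix.vecMul_injective_iff.mpr hli
  refine Matrix.PosDef.of_dotProduct_mulVec_pos ?_ ?_
  · have hs : Sᵀ = S := by
      have := hS.isHermitian
      rwa [Matrix.IsHermitian, Matrix.conjTranspose_eq_transpose_of_trivial] at this
    rw [Matrix.IsHermitian, Matrix.conjTranspose_eq_transpose_of_trivial]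
    rw [Matrix.transpose_mul, Matrix.transpose_mul, Matrix.transpose_transpose, hs,
      Matrix.mul_assoc]
  · intro x hx
    have hy : Φ.vecMul x ≠ 0 := fun h0 => hx (hinj (by simpa using h0))
    have := hS.dotProduct_mulVec_pos hy
    simpa [← Matrix.mulVec_mulVec, Matrix.mulVec_transpose, dotProduct_mulVec] using this

/-- Nested orthogonal projections: the difference of projectors is PSD. -/
lemma aux_proj_mono {n m m' : Type*} [Fintype n] [Fintype m] [Fintype m']
    [DecidableEq n] [DecidableEq m] [DecidableEq m']
    (B : Matrix n m ℝ) (C : Matrix n m' ℝ)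
    (hB : IsUnit (Bᵀ * B).det) (hC : IsUnit (Cᵀ * C).det)
    (E : Matrix m' m ℝ) (hE : C * E = B) :
    (C * (Cᵀ * C)⁻¹ * Cᵀ - B * (Bᵀ * B)⁻¹ * Bᵀ).PosSemidef := by
  set P := C * (Cᵀ * C)⁻¹ * Cᵀ with hP
  set Q := B * (Bᵀ * B)⁻¹ * Bᵀ with hQ
  have hBsym : ((Bᵀ * B)⁻¹)ᵀ = (Bᵀ * B)⁻¹ := by
    rw [Matrix.transpose_nonsing_inv, Matrix.transpose_mul, Matrix.transpose_transpose]
  have hCsym : ((Cᵀ * C)⁻¹)ᵀ = (Cᵀ * C)⁻¹ := by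
    rw [Matrix.transpose_nonsing_inv, Matrix.transpose_mul, Matrix.transpose_transpose]
  have hPt : Pᵀ = P := by
    rw [hP, Matrix.transpose_mul, Matrix.transpose_mul, Matrix.transpose_transpose, hCsym,
      Matrix.mul_assoc]
  have hQt : Qᵀ = Q := by
    rw [hQ, Matrix.transpose_mul, Matrix.transpose_mul, Matrix.transpose_transpose, hBsym,
      Matrix.mul_assoc]
  have hPP : P * P = P := by
    rw [hP]
    rw [show C * (Cᵀ * C)⁻¹ * Cᵀ * (C * (Cᵀ * C)⁻¹ * Cᵀ)
        = C * ((Cᵀ * C)⁻¹ * (Cᵀ * C) * (Cᵀ * C)⁻¹) * Cᵀ by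
      simp only [Matrix.mul_assoc]]
    rw [Matrix.nonsing_inv_mul _ hC, Matrix.one_mul]
  have hQQ : Q * Q = Q := by
    rw [hQ]
    rw [show B * (Bᵀ * B)⁻¹ * Bᵀ * (B * (Bᵀ * B)⁻¹ * Bᵀ)
        = B * ((Bᵀ * B)⁻¹ * (Bᵀ * B) * (Bᵀ * B)⁻¹) * Bᵀ by
      simp only [Matrix.mul_assoc]]
    rw [Matrix.nonsing_inv_mul _ hB, Matrix.one_mul]
  have hPB : P * B = B := by
    rw [← hE, hP]
    rw [show C * (Cᵀ * C)⁻¹ * Cᵀ * (C * E) = C * ((Cᵀ * C)⁻¹ * (Cᵀ * C)) * E by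
      simp only [Matrix.mul_assoc]]
    rw [Matrix.nonsing_inv_mul _ hC, Matrix.mul_one]
  have hPQ : P * Q = Q := by
    rw [hQ, show P * (B * (Bᵀ * B)⁻¹ * Bᵀ) = (P * B) * (Bᵀ * B)⁻¹ * Bᵀ by
      simp only [Matrix.mul_assoc], hPB]
  have hQP : Q * P = Q := by
    have h := congrArg Matrix.transpose hPQ
    rwa [Matrix.transpose_mul, hPt, hQt] at h
  have hD : (P - Q)ᵀ * (P - Q) = P - Q := by
    rw [Matrix.transpose_sub, hPt, hQt, Matrix.sub_mul, Matrix.mul_sub, Matrix.mul_sub,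
      hPP, hQQ, hPQ, hQP]
    abel
  have := Matrix.posSemidef_conjTranspose_mul_self (P - Q)
  rwa [Matrix.conjTranspose_eq_transpose_of_trivial, hD] at this

/-- appending measurement rows cannot increase the MSE (trace of
the error covariance) of the MAP linear decoder. -/
theorem stmt11 {N M₁ M₂ : ℕ}
    (Sig : Matrix (Fin N) (Fin N) ℝ) (hSig : Sig.PosDef)
    (Φ₁ : Matrix (Fin M₁) (Fin N) ℝ) (Ψ : Matrix (Fin M₂) (Fin N) ℝ)
    (hrank₁ : Φ₁.rank = M₁)
    (hrank₂ : (Matrix.fromRows Φ₁ Ψ).rank = M₁ + M₂) :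
    letI Φ₂ := Matrix.fromRows Φ₁ Ψ
    (Sig - Sig * Φ₂ᵀ * (Φ₂ * Sig * Φ₂ᵀ)⁻¹ * Φ₂ * Sig).trace
      ≤ (Sig - Sig * Φ₁ᵀ * (Φ₁ * Sig * Φ₁ᵀ)⁻¹ * Φ₁ * Sig).trace := by
  set Φ₂ := Matrix.fromRows Φ₁ Ψ with hΦ₂
  -- square root of Sig
  have hS : Sig.PosSemidef := hSig.posSemidef
  set A := CFC.sqrt Sig with hAdef
  have hA2 : A * A = Sig := CFC.sqrt_mul_sqrt_self Sig hS.nonneg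
  have hAt : Aᵀ = A := by
    have := (CFC.sqrt_nonneg Sig).posSemidef.isHermitian
    rwa [Matrix.IsHermitian, Matrix.conjTranspose_eq_transpose_of_trivial] at this
  -- the two "whitened" measurement matrices
  set B₁ := A * Φ₁ᵀ with hB₁
  set B₂ := A * Φ₂ᵀ with hB₂
  -- Gram matrices
  have hG₁ : Φ₁ * Sig * Φ₁ᵀ = B₁ᵀ * B₁ := by
    rw [hB₁, Matrix.transpose_mul, hAt, ← hA2]
    simp only [Matrix.mul_assoc, Matrix.transpose_transpose]
  have hG₂ : Φ₂ * Sig * Φ₂ᵀ = B₂ᵀ * B₂ := by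
    rw [hB₂, Matrix.transpose_mul, hAt, ← hA2]
    simp only [Matrix.mul_assoc, Matrix.transpose_transpose]
  -- invertibility from full rank
  have hPD₁ : (Φ₁ * Sig * Φ₁ᵀ).PosDef := aux_posDef_conj hSig Φ₁ (by simpa using hrank₁)
  have hPD₂ : (Φ₂ * Sig * Φ₂ᵀ).PosDef := aux_posDef_conj hSig Φ₂ (by simpa using hrank₂)
  have hU₁ : IsUnit (B₁ᵀ * B₁).det := by
    rw [← hG₁]; exact hPD₁.det_pos.ne'.isUnit
  have hU₂ : IsUnit (B₂ᵀ * B₂).det := by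
    rw [← hG₂]; exact hPD₂.det_pos.ne'.isUnit
  -- the column relation B₂ * E = B₁
  have hE : B₂ * Matrix.fromRows (1 : Matrix (Fin M₁) (Fin M₁) ℝ) (0 : Matrix (Fin M₂) (Fin M₁) ℝ) = B₁ := by
    rw [hB₂, hB₁, Matrix.mul_assoc]
    congr 1
    rw [show Φ₂ᵀ = Matrix.fromCols Φ₁ᵀ Ψᵀ from Matrix.transpose_fromRows Φ₁ Ψ,
      Matrix.fromCols_mul_fromRows]
    simp
  -- the projections
  set P₁ := B₁ * (B₁ᵀ * B₁)⁻¹ * B₁ᵀ with hP₁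
  set P₂ := B₂ * (B₂ᵀ * B₂)⁻¹ * B₂ᵀ with hP₂
  have hmono : (P₂ - P₁).PosSemidef := aux_proj_mono B₁ B₂ hU₁ hU₂ _ hE
  -- rewrite the correction terms
  have key₁ : Sig * Φ₁ᵀ * (Φ₁ * Sig * Φ₁ᵀ)⁻¹ * Φ₁ * Sig = A * P₁ * A := by
    rw [hG₁, hP₁, hB₁, Matrix.transpose_mul, hAt, ← hA2]
    simp only [Matrix.mul_assoc, Matrix.transpose_transpose]
  have key₂ : Sig * Φ₂ᵀ * (Φ₂ * Sig * Φ₂ᵀ)⁻¹ * Φ₂ * Sig = A * P₂ * A := by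
    rw [hG₂, hP₂, hB₂, Matrix.transpose_mul, hAt, ← hA2]
    simp only [Matrix.mul_assoc, Matrix.transpose_transpose]
  rw [key₁, key₂]
  have hdiff : (A * P₂ * A - A * P₁ * A) = Aᵀ * (P₂ - P₁) * A := by
    rw [hAt, Matrix.mul_sub, Matrix.sub_mul]
  have hpsd : (A * P₂ * A - A * P₁ * A).PosSemidef := by
    rw [hdiff]
    have := hmono.conjTranspose_mul_mul_same A
    rwa [Matrix.conjTranspose_eq_transpose_of_trivial] at this
  have htr : (A * P₁ * A).trace ≤ (A * P₂ * A).trace := by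
    have := aux_trace_nonneg hpsd
    rw [Matrix.trace_sub] at this
    linarith
  rw [Matrix.trace_sub, Matrix.trace_sub]
  linarith
end

section
/- Let Φ = [(Φ_K)ᵀ, (b₁,...,b_{M-K})]ᵀ be the concatenation of any K×N matrix Φ_K and the first M−K principal directions of Σ, assumed to have full row rank. Then the MSE of the MAP linear decoder with Φ is at most Σ_{n=M-K+1}^N λ_n, i.e., at most the MSE of sensing with the first M−K principal directions alone. -/
open Matrix Finset

/-- stacking an arbitrary `K×N` matrix with the first `M−K`
principal directions of `Σ` yields an MAP-decoder MSE at most the tail sum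
`Σ_{n=M-K+1}^N λ_n`, the MSE of the principal directions alone. -/
theorem stmt14 {N M K : ℕ} (hK : K ≤ M) (hMN : M ≤ N)
    (Sig B : Matrix (Fin N) (Fin N) ℝ) (lam : Fin N → ℝ)
    (hB : Bᵀ * B = 1)
    (hSig : Sig = B * Matrix.diagonal lam * Bᵀ)
    (hSigPD : Sig.PosDef)
    (hsort : ∀ i j : Fin N, i ≤ j → lam j ≤ lam i)
    (hpos : ∀ i, 0 < lam i)
    (ΦK : Matrix (Fin K) (Fin N) ℝ)
    (ΦP : Matrix (Fin (M - K)) (Fin N) ℝ)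
    (hPhiP : ∀ (m : Fin (M - K)) (i : Fin N),
      ΦP m i = B i (Fin.castLE (le_trans (Nat.sub_le M K) hMN) m))
    (hrank : (Matrix.fromRows ΦK ΦP).rank = K + (M - K)) :
    letI Φ := Matrix.fromRows ΦK ΦP
    (Sig - Sig * Φᵀ * (Φ * Sig * Φᵀ)⁻¹ * Φ * Sig).trace
      ≤ ∑ n ∈ Finset.univ.filter (fun n : Fin N => M - K ≤ (n : ℕ)), lam n := by
  set Φ := Matrix.fromRows ΦK ΦP with hΦdef
  set d : Fin N → ℝ := fun i => Real.sqrt (lam i) with hd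
  have hdpos : ∀ i, 0 < d i := fun i => Real.sqrt_pos.mpr (hpos i)
  set S : Matrix (Fin N) (Fin N) ℝ := B * Matrix.diagonal d * Bᵀ with hSdef
  have hBBt : B * Bᵀ = 1 := mul_eq_one_comm.mp hB
  have hSsym : Sᵀ = S := by
    rw [hSdef, Matrix.transpose_mul, Matrix.transpose_mul, Matrix.diagonal_transpose,
      Matrix.transpose_transpose, Matrix.mul_assoc]
  have hSS : S * S = Sig := by
    rw [hSdef, hSig]
    have : (B * Matrix.diagonal d * Bᵀ) * (B * Matrix.diagonal d * Bᵀ)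
        = B * (Matrix.diagonal d * (Bᵀ * B) * Matrix.diagonal d) * Bᵀ := by
      simp only [Matrix.mul_assoc]
    rw [this, hB, Matrix.mul_one, Matrix.diagonal_mul_diagonal,
      show (fun i => d i * d i) = lam from funext fun i => Real.mul_self_sqrt (hpos i).le]
  have hSigSym : Sigᵀ = Sig := hSigPD.1
  -- rows of Φ are linearly independent
  have hli : LinearIndependent ℝ (fun i => Φ i) := by
    rw [linearIndependent_iff_card_eq_finrank_span]
    have h1 := Φ.rank_eq_finrank_span_row
    rw [hrank] at h1
    simp only [Set.finrank]
    rw [show Module.finrank ℝ (Submodule.span ℝ (Set.range fun i => Φ i)) = K + (M - K) from h1.symm]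
    simp [Fintype.card_sum]
  have hvm : Function.Injective Φ.vecMul := Matrix.vecMul_injective_iff.mpr hli
  set G : Matrix (Fin K ⊕ Fin (M - K)) (Fin K ⊕ Fin (M - K)) ℝ := Φ * Sig * Φᵀ with hGdef
  have hGpd : G.PosDef := by
    refine Matrix.PosDef.of_dotProduct_mulVec_pos ?_ ?_
    · show Gᴴ = G
      rw [hGdef]
      simp only [conjTranspose_eq_transpose_of_trivial, Matrix.transpose_mul,
        Matrix.transpose_transpose, hSigSym, Matrix.mul_assoc]
    · intro x hx
      have hy : Φ.vecMul x ≠ 0 := by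
        intro h
        exact hx (hvm (by simp [h]))
      have := hSigPD.dotProduct_mulVec_pos (x := Φ.vecMul x) hy
      have key : star x ⬝ᵥ G *ᵥ x = star (Φ.vecMul x) ⬝ᵥ Sig *ᵥ (Φ.vecMul x) := by
        simp only [star_trivial, hGdef, Matrix.mul_assoc, Matrix.dotProduct_mulVec,
          ← Matrix.vecMul_vecMul, Matrix.vecMul_transpose]
        rw [dotProduct_comm, Matrix.dotProduct_mulVec, dotProduct_comm]
      rw [key]; exact this
  have hGdet : IsUnit G.det := isUnit_iff_ne_zero.mpr hGpd.det_pos.ne'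
  have hGinv1 : G⁻¹ * G = 1 := Matrix.nonsing_inv_mul G hGdet
  have hGsym : Gᵀ = G := by
    have h := hGpd.1
    rw [Matrix.IsHermitian, Matrix.conjTranspose_eq_transpose_of_trivial] at h
    exact h
  have hGinvsym : (G⁻¹)ᵀ = G⁻¹ := by rw [Matrix.transpose_nonsing_inv, hGsym]
  set T : Matrix (Fin N) (Fin K ⊕ Fin (M - K)) ℝ := S * Φᵀ with hT
  have hTt : Tᵀ = Φ * S := by rw [hT, Matrix.transpose_mul, Matrix.transpose_transpose, hSsym]
  have hTtT : Tᵀ * T = G := by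
    rw [hTt, hT, hGdef, Matrix.mul_assoc, ← Matrix.mul_assoc S S Φᵀ, hSS, ← Matrix.mul_assoc]
  set P : Matrix (Fin N) (Fin N) ℝ := T * G⁻¹ * Tᵀ with hP
  have hPT : P * T = T := by
    have h1 : P * T = T * (G⁻¹ * (Tᵀ * T)) := by rw [hP]; simp only [Matrix.mul_assoc]
    rw [h1, hTtT, hGinv1, Matrix.mul_one]
  have hPsym : Pᵀ = P := by
    rw [hP]
    simp only [Matrix.transpose_mul, Matrix.transpose_transpose, hGinvsym, Matrix.mul_assoc]
  set Q : Matrix (Fin N) (Fin N) ℝ := 1 - P with hQ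
  have hQsym : Qᵀ = Q := by rw [hQ, Matrix.transpose_sub, Matrix.transpose_one, hPsym]
  have hPP : P * P = P := by
    have h1 : P * P = (P * T) * (G⁻¹ * Tᵀ) := by rw [hP]; simp only [Matrix.mul_assoc]
    rw [h1, hPT, hP]
    exact (Matrix.mul_assoc T G⁻¹ Tᵀ).symm
  have hQQ : Q * Q = Q := by
    simp only [hQ, Matrix.sub_mul, Matrix.mul_sub, Matrix.one_mul, Matrix.mul_one, hPP]
    abel
  have hST : S * T = Sig * Φᵀ := by rw [hT, ← Matrix.mul_assoc, hSS]
  have hTS : Tᵀ * S = Φ * Sig := by rw [hTt, Matrix.mul_assoc, hSS]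
  have hE : Sig - Sig * Φᵀ * (Φ * Sig * Φᵀ)⁻¹ * Φ * Sig = S * Q * S := by
    have h2 : S * P * S = Sig * Φᵀ * G⁻¹ * Φ * Sig := by
      rw [hP]
      simp only [← Matrix.mul_assoc]
      rw [hST, Matrix.mul_assoc _ Tᵀ S, hTS, ← Matrix.mul_assoc]
    have h1 : S * Q * S = S * S - S * P * S := by
      simp only [hQ, Matrix.mul_sub, Matrix.sub_mul, Matrix.mul_one]
    rw [h1, h2, hSS, ← hGdef]
  have htr1 : (S * Q * S).trace = (Q * Sig).trace := by
    rw [Matrix.trace_mul_comm, ← Matrix.mul_assoc, hSS, Matrix.trace_mul_comm]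
  set C : Matrix (Fin N) (Fin N) ℝ := Bᵀ * Q * B with hC
  have htr2 : (Q * Sig).trace = ∑ n, C n n * lam n := by
    rw [hSig]
    simp only [← Matrix.mul_assoc]
    rw [Matrix.trace_mul_comm]
    simp only [← Matrix.mul_assoc, ← hC]
    simp [Matrix.trace, Matrix.mul_diagonal]
  have hCQB : C = (Q * B)ᵀ * (Q * B) := by
    rw [Matrix.transpose_mul, hQsym, Matrix.mul_assoc, ← Matrix.mul_assoc Q Q B, hQQ,
      ← Matrix.mul_assoc, hC]
  have hCnn : ∀ n, C n n = ∑ i, (Q * B) i n ^ 2 := by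
    intro n
    rw [hCQB, Matrix.mul_apply]
    refine Finset.sum_congr rfl fun i _ => ?_
    rw [Matrix.transpose_apply, pow_two]
  have hCnonneg : ∀ n, 0 ≤ C n n := by
    intro n; rw [hCnn]; positivity
  have hdiag : ∀ (A : Matrix (Fin N) (Fin N) ℝ), A.PosSemidef → ∀ n, 0 ≤ A n n :=
    fun A hA n => hA.diag_nonneg
  have hPsd : (Bᵀ * P * B).PosSemidef := by
    have h0 : (G⁻¹).PosSemidef := hGpd.inv.posSemidef
    have h1 := h0.mul_mul_conjTranspose_same (Bᵀ * T)
    have h2 : (Bᵀ * T) * G⁻¹ * (Bᵀ * T)ᴴ = Bᵀ * P * B := by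
      rw [Matrix.conjTranspose_eq_transpose_of_trivial, Matrix.transpose_mul,
        Matrix.transpose_transpose, hP]
      simp only [Matrix.mul_assoc]
    rwa [h2] at h1
  have hCle1 : ∀ n, C n n ≤ 1 := by
    intro n
    have hsum : C + Bᵀ * P * B = 1 := by
      rw [hC]
      simp only [hQ, Matrix.mul_sub, Matrix.sub_mul, Matrix.mul_one]
      rw [sub_add_cancel, hB]
    have h1 : C n n + (Bᵀ * P * B) n n = 1 := by
      have := congrFun (congrFun hsum n) n
      simpa [Matrix.add_apply, Matrix.one_apply_eq] using this
    have h2 := hdiag _ hPsd n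
    linarith
  have hSB : S * B = B * Matrix.diagonal d := by
    rw [hSdef, Matrix.mul_assoc, hB, Matrix.mul_one]
  have hCzero : ∀ n : Fin N, (n : ℕ) < M - K → C n n = 0 := by
    intro n hn
    set m : Fin (M - K) := ⟨(n : ℕ), hn⟩ with hm
    have hcast : Fin.castLE (le_trans (Nat.sub_le M K) hMN) m = n := by
      apply Fin.ext; rfl
    have hTcol : ∀ i, T i (Sum.inr m) = B i n * d n := by
      intro i
      have e1 : T i (Sum.inr m) = ∑ j, S i j * B j n := by
        simp [hT, Matrix.mul_apply, Matrix.transpose_apply, hΦdef,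
          Matrix.fromRows_apply_inr, hPhiP, hcast]
      rw [e1, show (∑ j, S i j * B j n) = (S * B) i n from (Matrix.mul_apply).symm,
        hSB, Matrix.mul_diagonal]
    have hPB : ∀ i, (P * B) i n = B i n := by
      intro i
      have h1 : (P * T) i (Sum.inr m) = T i (Sum.inr m) := by rw [hPT]
      rw [Matrix.mul_apply] at h1
      simp only [hTcol] at h1
      have h2 : (∑ j, P i j * B j n) * d n = B i n * d n := by
        rw [Finset.sum_mul]
        simpa [mul_assoc] using h1
      have h3 := mul_right_cancel₀ (hdpos n).ne' h2
      simpa [Matrix.mul_apply] using h3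
    have hQB : ∀ i, (Q * B) i n = 0 := by
      intro i
      have : (Q * B) i n = B i n - (P * B) i n := by
        simp [hQ, Matrix.sub_mul, Matrix.sub_apply]
      rw [this, hPB i, sub_self]
    rw [hCnn]
    simp [hQB]
  rw [hE, htr1, htr2]
  have hsplit : ∑ n, C n n * lam n
      = ∑ n ∈ Finset.univ.filter (fun n : Fin N => M - K ≤ (n : ℕ)), C n n * lam n := by
    refine (Finset.sum_subset (Finset.filter_subset _ _) ?_).symm
    intro x _ hx
    have hlt : (x : ℕ) < M - K := by
      by_contra h
      exact hx (Finset.mem_filter.mpr ⟨Finset.mem_univ _, not_lt.mp h⟩)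
    rw [hCzero x hlt, zero_mul]
  rw [hsplit]
  refine Finset.sum_le_sum ?_
  intro n _
  calc C n n * lam n ≤ 1 * lam n :=
        mul_le_mul_of_nonneg_right (hCle1 n) (hpos n).le
    _ = lam n := one_mul _
end

section
/- Suppose the online adaptive scheme's final decoder chooses among models by the MAP criterion, and the true model is j=1. If the online selection was correct (ĵ=1) and the sensing matrix includes the top M−K principal directions of Σ₁, then the reconstruction error of decoder Δ₁ applied to the combined measurements is at most Σ_{n=M-K+1}^N λ_n^{(1)} in expectation, strictly less than the expected error bound C₀ Σ_{n=M+1}^N λ_n^{(1)} of fully random sensing whenever K < M and C₀ ≥ 1 fails to compensate, i.e., whenever Σ_{n=M-K+1}^N λ_n^{(1)} < C₀ Σ_{n=M+1}^N λ_n^{(1)}. -/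
open MeasureTheory Matrix Finset ProbabilityTheory

/-- for `x ~ N(0, Σ₁)` and a sensing matrix stacking `K` arbitrary
(random) rows with the top `M−K` principal directions of `Σ₁` (full row rank),
the MSE of the MAP decoder `Δ₁` is at most `Σ_{n=M-K+1}^N λ_n`, and is strictly
less than the fully-random-sensing bound `C₀ Σ_{n=M+1}^N λ_n` whenever
`Σ_{n=M-K+1}^N λ_n < C₀ Σ_{n=M+1}^N λ_n`. -/
theorem stmt19 {N M K : ℕ} (hK : K ≤ M) (hMN : M ≤ N)
    (μ : Measure (Fin N → ℝ)) [IsProbabilityMeasure μ]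
    (S₁ B : Matrix (Fin N) (Fin N) ℝ) (lam : Fin N → ℝ)
    (hB : Bᵀ * B = 1)
    (hS₁ : S₁ = B * Matrix.diagonal lam * Bᵀ)
    (hS₁PD : S₁.PosDef)
    (hsort : ∀ i j : Fin N, i ≤ j → lam j ≤ lam i)
    (hgauss : ∀ a : Fin N → ℝ,
      Measure.map (fun x => a ⬝ᵥ x) μ = gaussianReal 0 (a ⬝ᵥ S₁.mulVec a).toNNReal)
    (hint : ∀ i j, Integrable (fun x : Fin N → ℝ => x i * x j) μ)
    (hmean : ∀ i, ∫ x, x i ∂μ = 0)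
    (hcov : ∀ i j, ∫ x, x i * x j ∂μ = S₁ i j)
    (ΦK : Matrix (Fin K) (Fin N) ℝ)
    (ΦP : Matrix (Fin (M - K)) (Fin N) ℝ)
    (hPhiP : ∀ (m : Fin (M - K)) (i : Fin N),
      ΦP m i = B i (Fin.castLE (le_trans (Nat.sub_le M K) hMN) m))
    (hrank : (Matrix.fromRows ΦK ΦP).rank = K + (M - K))
    (C₀ : ℝ) (hC₀ : 1 ≤ C₀) :
    letI Φ := Matrix.fromRows ΦK ΦP
    letI MSE := ∫ x, (∑ i, (x i - (S₁ * Φᵀ * (Φ * S₁ * Φᵀ)⁻¹ * Φ).mulVec x i) ^ 2) ∂μ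
    (MSE ≤ ∑ n ∈ Finset.univ.filter (fun n : Fin N => M - K ≤ (n : ℕ)), lam n) ∧
    ((∑ n ∈ Finset.univ.filter (fun n : Fin N => M - K ≤ (n : ℕ)), lam n
        < C₀ * ∑ n ∈ Finset.univ.filter (fun n : Fin N => M ≤ (n : ℕ)), lam n) →
      MSE < C₀ * ∑ n ∈ Finset.univ.filter (fun n : Fin N => M ≤ (n : ℕ)), lam n) := by
  set Φ : Matrix (Fin K ⊕ Fin (M - K)) (Fin N) ℝ := Matrix.fromRows ΦK ΦP with hΦdef
  set MSE := ∫ x, (∑ i, (x i - (S₁ * Φᵀ * (Φ * S₁ * Φᵀ)⁻¹ * Φ).mulVec x i) ^ 2) ∂μ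
    with hMSEdef
  -- positivity of eigenvalues
  have hBBt : B * Bᵀ = 1 := (mul_eq_one_comm).mp hB
  have hlam_pos : ∀ n, 0 < lam n := by
    intro n
    set v : Fin N → ℝ := B *ᵥ Pi.single n 1 with hvdef
    have h1 : Bᵀ *ᵥ v = Pi.single n 1 := by
      rw [hvdef, Matrix.mulVec_mulVec, hB, Matrix.one_mulVec]
    have hvne : v ≠ 0 := by
      intro h
      have h2 : (Pi.single n 1 : Fin N → ℝ) n = (0 : Fin N → ℝ) n := by
        rw [← h1, h, Matrix.mulVec_zero]
      simp at h2
    have hval : star v ⬝ᵥ S₁ *ᵥ v = lam n := by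
      rw [star_trivial, hS₁, ← Matrix.mulVec_mulVec, ← Matrix.mulVec_mulVec, h1,
        Matrix.diagonal_mulVec_single, Matrix.dotProduct_mulVec,
        ← Matrix.mulVec_transpose, h1]
      simp [dotProduct, Pi.single_apply]
    have := hS₁PD.dotProduct_mulVec_pos hvne
    rwa [hval] at this
  have hlam_nonneg : ∀ n, 0 ≤ lam n := fun n => (hlam_pos n).le
  set sq : Fin N → ℝ := fun n => Real.sqrt (lam n) with hsqdef
  have hsq_pos : ∀ n, 0 < sq n := fun n => Real.sqrt_pos.mpr (hlam_pos n)
  have hsqsq : (fun n => sq n * sq n) = lam := by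
    funext n; exact Real.mul_self_sqrt (hlam_nonneg n)
  set L : Matrix (Fin N) (Fin N) ℝ := B * Matrix.diagonal sq with hLdef
  have hdd : Matrix.diagonal sq * Matrix.diagonal sq = Matrix.diagonal lam := by
    rw [Matrix.diagonal_mul_diagonal, hsqsq]
  have hLLt : L * Lᵀ = S₁ := by
    rw [hLdef, Matrix.transpose_mul, Matrix.diagonal_transpose, hS₁, ← hdd]
    simp only [Matrix.mul_assoc]
  have hLtL : Lᵀ * L = Matrix.diagonal lam := by
    rw [hLdef, Matrix.transpose_mul, Matrix.diagonal_transpose, Matrix.mul_assoc,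
      ← Matrix.mul_assoc Bᵀ, hB, Matrix.one_mul, hdd]
  set C : Matrix (Fin K ⊕ Fin (M - K)) (Fin K ⊕ Fin (M - K)) ℝ := Φ * S₁ * Φᵀ with hCdef
  -- C is invertible
  have hwne : ∀ v : Fin K ⊕ Fin (M - K) → ℝ, v ≠ 0 → Φᵀ *ᵥ v ≠ 0 := by
    intro v hv hz
    have h1 : Φᵀ.rank = K + (M - K) := by rw [Matrix.rank_transpose]; exact hrank
    have h2 : LinearMap.ker (Φᵀ.mulVecLin) = ⊥ := by
      have hrn := LinearMap.finrank_range_add_finrank_ker (Φᵀ.mulVecLin)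
      rw [Module.finrank_fintype_fun_eq_card] at hrn
      have hcard : Fintype.card (Fin K ⊕ Fin (M - K)) = K + (M - K) := by simp
      rw [hcard] at hrn
      have hr : Module.finrank ℝ (LinearMap.range Φᵀ.mulVecLin) = K + (M - K) := h1
      rw [hr] at hrn
      have : Module.finrank ℝ (LinearMap.ker Φᵀ.mulVecLin) = 0 := by omega
      exact Submodule.finrank_eq_zero.mp this
    have : v ∈ LinearMap.ker (Φᵀ.mulVecLin) := by
      simp only [LinearMap.mem_ker, Matrix.mulVecLin_apply]
      exact hz
    rw [h2] at this
    exact hv (by simpa using this)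
  have hCPD : C.PosDef := by
    refine Matrix.PosDef.of_dotProduct_mulVec_pos ?_ ?_
    · have : Cᴴ = Cᵀ := rfl
      rw [Matrix.IsHermitian, this, hCdef, hS₁]
      simp [Matrix.transpose_mul, Matrix.mul_assoc, Matrix.diagonal_transpose]
    · intro v hv
      have h1 : star v ⬝ᵥ C *ᵥ v = star (Φᵀ *ᵥ v) ⬝ᵥ S₁ *ᵥ (Φᵀ *ᵥ v) := by
        rw [star_trivial, star_trivial, hCdef]
        conv_lhs => rw [← Matrix.mulVec_mulVec, ← Matrix.mulVec_mulVec,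
          Matrix.dotProduct_mulVec, ← Matrix.mulVec_transpose]
      rw [h1]
      exact hS₁PD.dotProduct_mulVec_pos (hwne v hv)
  have hCdet : IsUnit C.det := hCPD.isUnit.map (Matrix.detMonoidHom)
  have hCinv : C * C⁻¹ = 1 := Matrix.mul_nonsing_inv C hCdet
  have hCinv' : C⁻¹ * C = 1 := Matrix.nonsing_inv_mul C hCdet
  have hCsymm : Cᵀ = C := by
    rw [hCdef, hS₁]
    simp [Matrix.transpose_mul, Matrix.mul_assoc, Matrix.diagonal_transpose]
  have hCinvsymm : (C⁻¹)ᵀ = C⁻¹ := by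
    rw [Matrix.transpose_nonsing_inv, hCsymm]
  set P : Matrix (Fin N) (Fin N) ℝ := Lᵀ * Φᵀ * C⁻¹ * (Φ * L) with hPdef
  have hPsymm : Pᵀ = P := by
    rw [hPdef]
    simp only [Matrix.transpose_mul, hCinvsymm]
    simp only [Matrix.mul_assoc, Matrix.transpose_transpose]
  have hmid : Φ * L * (Lᵀ * Φᵀ) = C := by
    have : Φ * L * (Lᵀ * Φᵀ) = Φ * (L * Lᵀ) * Φᵀ := by simp only [Matrix.mul_assoc]
    rw [this, hLLt, hCdef]
  have hPidem : P * P = P := by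
    calc P * P = Lᵀ * Φᵀ * C⁻¹ * (Φ * L * (Lᵀ * Φᵀ)) * (C⁻¹ * (Φ * L)) := by
          rw [hPdef]; simp only [Matrix.mul_assoc]
    _ = Lᵀ * Φᵀ * (C⁻¹ * C) * (C⁻¹ * (Φ * L)) := by
          rw [hmid]; simp only [Matrix.mul_assoc]
    _ = Lᵀ * Φᵀ * (C⁻¹ * (C * C⁻¹)) * (Φ * L) := by simp only [Matrix.mul_assoc]
    _ = P := by rw [hCinv, Matrix.mul_one, hPdef]
  set A : Matrix (Fin N) (Fin N) ℝ := S₁ * Φᵀ * C⁻¹ * Φ with hAdef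
  set Q : Matrix (Fin N) (Fin N) ℝ := 1 - A with hQdef
  clear_value sq L C P A Q
  have hAL : A * L = L * P := by
    rw [hAdef, hPdef, ← hLLt]; simp only [Matrix.mul_assoc]
  have hQL : Q * L = L * (1 - P) := by
    rw [hQdef, Matrix.sub_mul, Matrix.one_mul, hAL, Matrix.mul_sub, Matrix.mul_one]
  have h1mPt : (1 - P)ᵀ = 1 - P := by
    rw [Matrix.transpose_sub, Matrix.transpose_one, hPsymm]
  have h1mP : (1 - P) * (1 - P) = 1 - P := by
    have expand : (1 - P) * (1 - P) = 1 - P - P + P * P := by noncomm_ring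
    rw [expand, hPidem]
    abel
  have hQSQ : Q * S₁ * Qᵀ = L * (1 - P) * Lᵀ := by
    calc Q * S₁ * Qᵀ = (Q * L) * (Lᵀ * Qᵀ) := by
          rw [← hLLt]; simp only [Matrix.mul_assoc]
    _ = (Q * L) * (Q * L)ᵀ := by rw [Matrix.transpose_mul]
    _ = (L * (1 - P)) * (L * (1 - P))ᵀ := by rw [hQL]
    _ = (L * (1 - P)) * ((1 - P)ᵀ * Lᵀ) := by rw [Matrix.transpose_mul]
    _ = L * ((1 - P) * (1 - P)) * Lᵀ := by
          rw [h1mPt]; simp only [Matrix.mul_assoc]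
    _ = L * (1 - P) * Lᵀ := by rw [h1mP]
  -- MSE as a trace
  have hMSE : MSE = ∑ n, lam n * (1 - P n n) := by
    have hpt : (fun x : Fin N → ℝ => ∑ i, (x i - (A *ᵥ x) i) ^ 2)
        = fun x => ∑ i, ∑ j, ∑ k, (Q i j * Q i k) * (x j * x k) := by
      funext x
      refine Finset.sum_congr rfl fun i _ => ?_
      have hres : x i - (A *ᵥ x) i = ∑ j, Q i j * x j := by
        have h1 : x i - (A *ᵥ x) i = ((1 - A) *ᵥ x) i := by
          rw [Matrix.sub_mulVec, Matrix.one_mulVec]; rfl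
        rw [h1, ← hQdef]
        simp [Matrix.mulVec, dotProduct]
      rw [hres, pow_two, Finset.sum_mul_sum]
      exact Finset.sum_congr rfl fun j _ =>
        Finset.sum_congr rfl fun k _ => by ring
    have hint2 : MSE = ∑ i : Fin N, ∑ j, ∑ k, (Q i j * Q i k) * S₁ j k := by
      rw [hMSEdef, hpt, integral_finset_sum _ (fun i _ =>
        integrable_finset_sum _ fun j _ =>
          integrable_finset_sum _ fun k _ => (hint j k).const_mul _)]
      refine Finset.sum_congr rfl fun i _ => ?_
      rw [integral_finset_sum _ (fun j _ =>
        integrable_finset_sum _ fun k _ => (hint j k).const_mul _)]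
      refine Finset.sum_congr rfl fun j _ => ?_
      rw [integral_finset_sum _ (fun k _ => (hint j k).const_mul _)]
      refine Finset.sum_congr rfl fun k _ => ?_
      rw [MeasureTheory.integral_const_mul, hcov]
    have htr1 : ∀ i, (Q * S₁ * Qᵀ) i i = ∑ j, ∑ k, (Q i j * Q i k) * S₁ j k := by
      intro i
      rw [Matrix.mul_apply]
      simp_rw [Matrix.mul_apply, Matrix.transpose_apply, Finset.sum_mul]
      rw [Finset.sum_comm]
      exact Finset.sum_congr rfl fun j _ =>
        Finset.sum_congr rfl fun k _ => by ring
    have hdiagsum : ∀ j k, ∑ i, L i j * L i k = Matrix.diagonal lam j k := by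
      intro j k
      have h := congrFun (congrFun hLtL j) k
      rw [Matrix.mul_apply] at h
      simpa [Matrix.transpose_apply] using h
    have htr2 : ∑ i : Fin N, (Q * S₁ * Qᵀ) i i = ∑ n, lam n * (1 - P n n) := by
      simp only [hQSQ]
      calc ∑ i : Fin N, (L * (1 - P) * Lᵀ) i i
          = ∑ i : Fin N, ∑ j, ∑ k, (L i j * (1 - P) j k) * L i k := by
            refine Finset.sum_congr rfl fun i _ => ?_
            calc (L * (1 - P) * Lᵀ) i i
                = ∑ k, (L * (1 - P)) i k * Lᵀ k i := Matrix.mul_apply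
              _ = ∑ k, ∑ j, (L i j * (1 - P) j k) * L i k := by
                  refine Finset.sum_congr rfl fun k _ => ?_
                  rw [Matrix.mul_apply, Matrix.transpose_apply, Finset.sum_mul]
              _ = ∑ j, ∑ k, (L i j * (1 - P) j k) * L i k := Finset.sum_comm
        _ = ∑ j, ∑ k, ((1 - P) j k) * ∑ i, L i j * L i k := by
            rw [Finset.sum_comm]
            refine Finset.sum_congr rfl fun j _ => ?_
            rw [Finset.sum_comm]
            refine Finset.sum_congr rfl fun k _ => ?_
            rw [Finset.mul_sum]
            exact Finset.sum_congr rfl fun i _ => by ring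
        _ = ∑ j, ∑ k, ((1 - P) j k) * Matrix.diagonal lam j k := by
            refine Finset.sum_congr rfl fun j _ => Finset.sum_congr rfl fun k _ => ?_
            rw [hdiagsum]
        _ = ∑ n, lam n * (1 - P n n) := by
            refine Finset.sum_congr rfl fun j _ => ?_
            rw [Finset.sum_eq_single j
              (fun k _ hk => by rw [Matrix.diagonal_apply_ne _ (Ne.symm hk), mul_zero])
              (fun h => absurd (Finset.mem_univ j) h)]
            simp [Matrix.diagonal_apply_eq, Matrix.sub_apply, Matrix.one_apply_eq]
            ring
    rw [hint2, ← htr2]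
    exact Finset.sum_congr rfl fun i _ => (htr1 i).symm
  -- diagonal bounds for the projection
  have hsym' : ∀ a b, P a b = P b a := fun a b => by
    conv_lhs => rw [← hPsymm, Matrix.transpose_apply]
  have hPP : ∀ n, P n n = ∑ j, (P n j) ^ 2 := by
    intro n
    conv_lhs => rw [← hPidem, Matrix.mul_apply]
    exact Finset.sum_congr rfl fun j _ => by rw [hsym' j n]; ring
  have hPdiag : ∀ n, 0 ≤ P n n ∧ P n n ≤ 1 := by
    intro n
    have h0 : 0 ≤ P n n := by
      rw [hPP n]; exact Finset.sum_nonneg fun j _ => sq_nonneg _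
    have h2 : (P n n) ^ 2 ≤ P n n := by
      conv_rhs => rw [hPP n]
      exact Finset.single_le_sum (fun j _ => sq_nonneg (P n j)) (Finset.mem_univ n)
    exact ⟨h0, by nlinarith⟩
  have hPtop : ∀ n : Fin N, (n : ℕ) < M - K → P n n = 1 := by
    intro n hn
    have hfix : P * (Lᵀ * Φᵀ) = Lᵀ * Φᵀ := by
      calc P * (Lᵀ * Φᵀ) = Lᵀ * Φᵀ * C⁻¹ * (Φ * L * (Lᵀ * Φᵀ)) := by
            rw [hPdef]; simp only [Matrix.mul_assoc]
      _ = Lᵀ * Φᵀ * (C⁻¹ * C) := by rw [hmid]; simp only [Matrix.mul_assoc]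
      _ = Lᵀ * Φᵀ := by rw [hCinv', Matrix.mul_one]
    set m : Fin (M - K) := ⟨(n : ℕ), hn⟩ with hmdef
    have hm' : Fin.castLE (le_trans (Nat.sub_le M K) hMN) m = n := by
      apply Fin.ext; rfl
    have hcol : ∀ j : Fin N, (Lᵀ * Φᵀ) j (Sum.inr m)
        = if j = n then sq n else 0 := by
      intro j
      rw [Matrix.mul_apply]
      have : ∀ i, Lᵀ j i * Φᵀ i (Sum.inr m) = (B i j * sq j) * B i n := by
        intro i
        rw [Matrix.transpose_apply, Matrix.transpose_apply, hΦdef,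
          Matrix.fromRows_apply_inr, hPhiP, hm', hLdef, Matrix.mul_diagonal]
      rw [Finset.sum_congr rfl fun i _ => this i]
      have h2 : ∑ i, (B i j * sq j) * B i n = sq j * (Bᵀ * B) j n := by
        rw [Matrix.mul_apply, Finset.mul_sum]
        exact Finset.sum_congr rfl fun i _ => by
          rw [Matrix.transpose_apply]; ring
      rw [h2, hB]
      by_cases h : j = n
      · subst h; simp [Matrix.one_apply]
      · simp [Matrix.one_apply, h]
    have hentry := congrFun (congrFun hfix n) (Sum.inr m)
    rw [Matrix.mul_apply] at hentry
    rw [Finset.sum_congr rfl (fun j _ => by rw [hcol j])] at hentry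
    rw [hcol n] at hentry
    simp only [mul_ite, mul_zero] at hentry
    rw [Finset.sum_ite_eq' Finset.univ n (fun j => P n j * sq n)] at hentry
    simp only [Finset.mem_univ, if_true] at hentry
    exact mul_right_cancel₀ (ne_of_gt (hsq_pos n)) (by rw [hentry, one_mul])
  -- main bound
  have hbound : MSE ≤ ∑ n ∈ Finset.univ.filter (fun n : Fin N => M - K ≤ (n : ℕ)), lam n := by
    rw [hMSE]
    rw [← Finset.sum_filter_add_sum_filter_not Finset.univ (fun n : Fin N => M - K ≤ (n : ℕ))]
    have h2 : ∑ n ∈ Finset.univ.filter (fun n : Fin N => ¬ (M - K ≤ (n : ℕ))),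
        lam n * (1 - P n n) = 0 := by
      apply Finset.sum_eq_zero
      intro n hn
      simp only [Finset.mem_filter, not_le] at hn
      rw [hPtop n hn.2]
      ring
    rw [h2, add_zero]
    apply Finset.sum_le_sum
    intro n hn
    have h := hPdiag n
    nlinarith [hlam_nonneg n]
  refine ⟨hbound, fun hlt => lt_of_le_of_lt hbound hlt⟩
end
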